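/- Let D = {e_1,...,e_n} be the set of unit vectors (n ≤ ∞), k ∈ ℝ^n with Σ_i e^{-k^i} ≤ 1, q a vector of i.i.d. standard exponential random variables, s_t ∈ [0,1]^n, and ε_t > 0 decreasing. Define the IFPL expected loss r_t := E[M(s_{1:t} + (k−q)/ε_t)·s_t]. Then r_{1:T} ≤ s_{1:T}^i + k^i/ε_T for every expert i. -/

import Mathlib

open MeasureTheory

/-- IFPL bounded by BEH (Corollary 3): r_{1:T} ≤ s_{1:T}ⁱ + kⁱ/ε_T for every expert i. -/
theorem ifpl_bounded_by_expert {Ω : Type*} [MeasurableSpace Ω] (μ : Measure Ω)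
    [IsProbabilityMeasure μ] (n : ℕ) (hn : 1 ≤ n) (T : ℕ) (hT : 1 ≤ T)
    (q : Fin n → Ω → ℝ) (hmeas : ∀ i, Measurable (q i))
    (hindep : ProbabilityTheory.iIndepFun q μ)
    (htail : ∀ i, ∀ a : ℝ, 0 ≤ a → μ {ω | a ≤ q i ω} = ENNReal.ofReal (Real.exp (-a)))
    (htail' : ∀ i, ∀ a : ℝ, a < 0 → μ {ω | a ≤ q i ω} = 1)
    (k : Fin n → ℝ) (hk : ∑ i, Real.exp (-k i) ≤ 1)
    (s : ℕ → Fin n → ℝ) (hs : ∀ t i, s t i ∈ Set.Icc (0 : ℝ) 1)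
    (ε : ℕ → ℝ) (hεpos : ∀ t, 0 < ε t)
    (hεdec : ∀ t₁ t₂, 1 ≤ t₁ → t₁ ≤ t₂ → t₂ ≤ T → ε t₂ ≤ ε t₁)
    -- the IFPL decision J t minimizes s_{1:t} + (k - q)/ε_t
    (J : ℕ → Ω → Fin n) (hJmeas : ∀ t, Measurable (J t))
    (hJ : ∀ t ω i,
      (∑ u ∈ Finset.Icc 1 t, s u) (J t ω) + (k (J t ω) - q (J t ω) ω) / ε t ≤
        (∑ u ∈ Finset.Icc 1 t, s u) i + (k i - q i ω) / ε t)
    -- the expected IFPL loss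
    (r : ℕ → ℝ) (hr : ∀ t, r t = ∫ ω, s t (J t ω) ∂μ) :
    ∀ i, ∑ t ∈ Finset.Icc 1 T, r t ≤
      (∑ t ∈ Finset.Icc 1 T, s t i) + k i / ε T := by
  intro i
  -- the "weight" g t = 1/ε t for t ≥ 1, g 0 = 0
  set g : ℕ → ℝ := fun t => if t = 0 then 0 else (ε t)⁻¹ with hg
  have hg0 : g 0 = 0 := by simp [hg]
  have hgpos : ∀ t, 1 ≤ t → g t = (ε t)⁻¹ := by
    intro t ht
    simp [hg, Nat.one_le_iff_ne_zero.mp ht]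
  -- rewrite hJ with multiplication by g
  have hJ' : ∀ t, 1 ≤ t → ∀ ω (j : Fin n),
      (∑ u ∈ Finset.Icc 1 t, s u (J t ω)) + (k (J t ω) - q (J t ω) ω) * g t ≤
        (∑ u ∈ Finset.Icc 1 t, s u j) + (k j - q j ω) * g t := by
    intro t ht ω j
    have h := hJ t ω j
    simp only [Finset.sum_apply] at h
    rw [div_eq_mul_inv, div_eq_mul_inv, ← hgpos t ht] at h
    exact h
  -- Be-the-leader lemma, pointwise, by induction
  have btl : ∀ ω, ∀ m, 1 ≤ m →
      ∑ t ∈ Finset.Icc 1 m,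
          (s t (J t ω) + (k (J t ω) - q (J t ω) ω) * (g t - g (t - 1))) ≤
        (∑ u ∈ Finset.Icc 1 m, s u (J m ω)) + (k (J m ω) - q (J m ω) ω) * g m := by
    intro ω m hm
    induction m, hm using Nat.le_induction with
    | base =>
      simp only [Finset.Icc_self, Finset.sum_singleton]
      rw [show (1:ℕ) - 1 = 0 from rfl, hg0]
      ring_nf
      exact le_refl _
    | succ m hm ih =>
      have hstep :
          (∑ u ∈ Finset.Icc 1 m, s u (J m ω)) + (k (J m ω) - q (J m ω) ω) * g m ≤
            (∑ u ∈ Finset.Icc 1 m, s u (J (m+1) ω)) +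
              (k (J (m+1) ω) - q (J (m+1) ω) ω) * g m := hJ' m hm ω (J (m+1) ω)
      rw [Finset.sum_Icc_succ_top (by omega : 1 ≤ m + 1),
        Finset.sum_Icc_succ_top (by omega : 1 ≤ m + 1)]
      have hm1 : (m + 1) - 1 = m := by omega
      rw [hm1]
      have h2 := add_le_add_right (ih.trans hstep)
        (s (m+1) (J (m+1) ω) + (k (J (m+1) ω) - q (J (m+1) ω) ω) * (g (m+1) - g m))
      calc (∑ t ∈ Finset.Icc 1 m,
              (s t (J t ω) + (k (J t ω) - q (J t ω) ω) * (g t - g (t - 1)))) +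
            (s (m+1) (J (m+1) ω) + (k (J (m+1) ω) - q (J (m+1) ω) ω) * (g (m+1) - g m))
          ≤ ((∑ u ∈ Finset.Icc 1 m, s u (J (m+1) ω)) +
              (k (J (m+1) ω) - q (J (m+1) ω) ω) * g m) +
            (s (m+1) (J (m+1) ω) + (k (J (m+1) ω) - q (J (m+1) ω) ω) * (g (m+1) - g m)) := by linarith [h2]
        _ = ((∑ u ∈ Finset.Icc 1 m, s u (J (m+1) ω)) + s (m+1) (J (m+1) ω)) +
              (k (J (m+1) ω) - q (J (m+1) ω) ω) * g (m+1) := by ring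
  -- the perturbation maximum
  have hne : (Finset.univ : Finset (Fin n)).Nonempty := ⟨⟨0, hn⟩, Finset.mem_univ _⟩
  set Mf : Ω → ℝ := fun ω => (Finset.univ.sup' hne fun j => q j ω - k j) ⊔ 0 with hMf
  have hMnn : ∀ ω, 0 ≤ Mf ω := fun ω => le_max_right _ _
  have hMge : ∀ (j : Fin n) ω, q j ω - k j ≤ Mf ω := fun j ω =>
    le_trans (Finset.le_sup' (fun j => q j ω - k j) (Finset.mem_univ j)) (le_max_left _ _)
  -- increments of g are nonnegative up to time T
  have hcnn : ∀ t, 1 ≤ t → t ≤ T → 0 ≤ g t - g (t - 1) := by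
    intro t ht htT
    rcases eq_or_lt_of_le ht with h1 | h1
    · rw [← h1]
      rw [show (1:ℕ) - 1 = 0 from rfl, hg0, hgpos 1 le_rfl]
      simp [le_of_lt (inv_pos.mpr (hεpos 1))]
    · have ht1 : 1 ≤ t - 1 := by omega
      rw [hgpos t ht, hgpos (t-1) ht1]
      have hle : ε t ≤ ε (t - 1) := hεdec (t-1) t ht1 (by omega) htT
      have := inv_anti₀ (hεpos t) (le_refl (ε t))
      have h3 : (ε (t-1))⁻¹ ≤ (ε t)⁻¹ := by
        apply inv_anti₀ (hεpos t) hle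
      linarith
  -- telescoping sum of increments
  have htel : ∑ t ∈ Finset.Icc 1 T, (g t - g (t - 1)) = g T := by
    rw [show Finset.Icc 1 T = Finset.Ico 1 (T + 1) from by rw [Finset.Ico_add_one_right_eq_Icc],
      Finset.sum_Ico_eq_sum_range]
    simp only [Nat.add_sub_cancel, add_tsub_cancel_left]
    have h1 : ∀ x ∈ Finset.range T, g (1 + x) - g x = g (x + 1) - g x := by
      intro x _
      rw [show 1 + x = x + 1 from by omega]
    rw [Finset.sum_congr rfl h1, Finset.sum_range_sub g T, hg0, sub_zero]
  -- pointwise regret bound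
  have key : ∀ ω, ∑ t ∈ Finset.Icc 1 T, s t (J t ω) ≤
      (∑ t ∈ Finset.Icc 1 T, s t i) + (k i - q i ω) * g T + Mf ω * g T := by
    intro ω
    have h1 := (btl ω T hT).trans (hJ' T hT ω i)
    have h5 : ∑ t ∈ Finset.Icc 1 T, (q (J t ω) ω - k (J t ω)) * (g t - g (t - 1)) ≤
        Mf ω * g T := by
      rw [← htel, Finset.mul_sum]
      apply Finset.sum_le_sum
      intro t ht
      obtain ⟨h2, h3⟩ := Finset.mem_Icc.mp ht
      exact mul_le_mul_of_nonneg_right (hMge _ ω) (hcnn t h2 h3)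
    have hsplit : ∑ t ∈ Finset.Icc 1 T, s t (J t ω) =
        (∑ t ∈ Finset.Icc 1 T,
          (s t (J t ω) + (k (J t ω) - q (J t ω) ω) * (g t - g (t - 1)))) +
        ∑ t ∈ Finset.Icc 1 T, (q (J t ω) ω - k (J t ω)) * (g t - g (t - 1)) := by
      rw [← Finset.sum_add_distrib]
      exact Finset.sum_congr rfl fun t _ => by ring
    linarith
  -- measurability and integrability of the losses
  have hLmeas : ∀ t, Measurable fun ω => s t (J t ω) := fun t =>
    (measurable_of_countable (s t)).comp (hJmeas t)
  have hLint : ∀ t, Integrable (fun ω => s t (J t ω)) μ := by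
    intro t
    refine (integrable_const (1:ℝ)).mono' (hLmeas t).aestronglyMeasurable
      (ae_of_all _ fun ω => ?_)
    obtain ⟨h1, h2⟩ := hs t (J t ω)
    rw [Real.norm_eq_abs, abs_le]
    exact ⟨by linarith, h2⟩
  -- q j is a.e. nonnegative
  have hqnn : ∀ j, 0 ≤ᵐ[μ] q j := by
    intro j
    have hnull : ∀ a : ℝ, a < 0 → μ {ω | q j ω < a} = 0 := by
      intro a ha
      have hms : MeasurableSet {ω | a ≤ q j ω} :=
        measurableSet_le measurable_const (hmeas j)
      have hset : {ω | q j ω < a} = {ω | a ≤ q j ω}ᶜ := by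
        ext ω; simp [not_le]
      rw [hset, measure_compl hms (measure_ne_top μ _), htail' j a ha, measure_univ,
        tsub_self]
    have h0 : μ {ω | q j ω < 0} = 0 := by
      have hsub : {ω | q j ω < 0} ⊆ ⋃ m : ℕ, {ω | q j ω < -(1 / (m + 1 : ℝ))} := by
        intro ω hω
        simp only [Set.mem_setOf_eq] at hω
        obtain ⟨m, hm⟩ := exists_nat_one_div_lt (K := ℝ) (neg_pos.mpr hω)
        exact Set.mem_iUnion.mpr ⟨m, by simp only [Set.mem_setOf_eq]; linarith⟩
      refine measure_mono_null hsub (measure_iUnion_null fun m => hnull _ ?_)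
      have : (0:ℝ) < 1 / (m + 1 : ℝ) := by positivity
      linarith
    rw [Filter.EventuallyLE, ae_iff]
    simpa [not_le] using h0
  -- the tail bound valid for all thresholds
  have htail_le : ∀ (j : Fin n) (a : ℝ),
      μ {ω | a ≤ q j ω} ≤ ENNReal.ofReal (Real.exp (-a)) := by
    intro j a
    rcases le_or_gt 0 a with h | h
    · rw [htail j a h]
    · rw [htail' j a h]
      exact ENNReal.one_le_ofReal.mpr (Real.one_le_exp (by linarith))
  -- the exponential lintegral over (0,∞)
  have hexp_int : IntegrableOn (fun x => Real.exp (-x)) (Set.Ioi (0:ℝ)) := by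
    have := exp_neg_integrableOn_Ioi 0 (zero_lt_one (α := ℝ))
    simpa using this
  have hIoi : ∫⁻ t in Set.Ioi (0:ℝ), ENNReal.ofReal (Real.exp (-t)) = 1 := by
    rw [← ofReal_integral_eq_lintegral_ofReal hexp_int
      (ae_of_all _ fun x => (Real.exp_pos (-x)).le)]
    rw [integral_exp_neg_Ioi_zero, ENNReal.ofReal_one]
  -- expectation of q j is 1
  have hqlint : ∀ j, ∫⁻ ω, ENNReal.ofReal (q j ω) ∂μ = 1 := by
    intro j
    rw [lintegral_eq_lintegral_meas_le μ (hqnn j) (hmeas j).aemeasurable, ← hIoi]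
    refine setLIntegral_congr_fun measurableSet_Ioi (fun t ht => ?_)
    exact htail j t (le_of_lt ht)
  have hqint : ∀ j, Integrable (q j) μ := by
    intro j
    refine ⟨(hmeas j).aestronglyMeasurable, ?_⟩
    rw [hasFiniteIntegral_iff_ofReal (hqnn j), hqlint j]
    exact ENNReal.one_lt_top
  have hqexp : ∀ j, ∫ ω, q j ω ∂μ = 1 := by
    intro j
    rw [integral_eq_lintegral_of_nonneg_ae (hqnn j) (hmeas j).aestronglyMeasurable,
      hqlint j, ENNReal.toReal_one]
  -- Mf is measurable
  have hMmeas : Measurable Mf := by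
    have h1 : Measurable (Finset.univ.sup' hne fun j => fun ω => q j ω - k j) :=
      Finset.measurable_sup' hne fun j _ => (hmeas j).sub measurable_const
    have h2 : Mf = (Finset.univ.sup' hne fun j => fun ω => q j ω - k j) ⊔ 0 := by
      funext ω
      rw [hMf]
      simp only [Pi.sup_apply, Pi.zero_apply]
      congr 1
      exact (Finset.sup'_apply (C := fun _ : Ω => ℝ) hne (fun j ω => q j ω - k j) ω).symm
    rw [h2]
    exact h1.max measurable_const
  -- tail bound for Mf
  have hMtail : ∀ t : ℝ, 0 < t →
      μ {ω | t ≤ Mf ω} ≤ ENNReal.ofReal (Real.exp (-t)) := by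
    intro t ht
    have hsub : {ω | t ≤ Mf ω} ⊆ ⋃ j : Fin n, {ω | t + k j ≤ q j ω} := by
      intro ω hω
      simp only [Set.mem_setOf_eq, hMf] at hω
      have h2 : t ≤ Finset.univ.sup' hne fun j => q j ω - k j := by
        rcases le_max_iff.mp hω with h | h
        · exact h
        · linarith
      obtain ⟨j, _, hj⟩ := (Finset.le_sup'_iff hne).mp h2
      exact Set.mem_iUnion.mpr ⟨j, by simp only [Set.mem_setOf_eq]; linarith⟩
    calc μ {ω | t ≤ Mf ω} ≤ μ (⋃ j : Fin n, {ω | t + k j ≤ q j ω}) := measure_mono hsub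
      _ ≤ ∑ j : Fin n, μ {ω | t + k j ≤ q j ω} := measure_iUnion_fintype_le μ _
      _ ≤ ∑ j : Fin n, ENNReal.ofReal (Real.exp (-(t + k j))) :=
          Finset.sum_le_sum fun j _ => htail_le j _
      _ = ENNReal.ofReal (∑ j : Fin n, Real.exp (-(t + k j))) :=
          (ENNReal.ofReal_sum_of_nonneg fun j _ => (Real.exp_pos _).le).symm
      _ ≤ ENNReal.ofReal (Real.exp (-t)) := by
          apply ENNReal.ofReal_le_ofReal
          have hsum : ∑ j : Fin n, Real.exp (-(t + k j)) =
              Real.exp (-t) * ∑ j : Fin n, Real.exp (-k j) := by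
            rw [Finset.mul_sum]
            exact Finset.sum_congr rfl fun j _ => by
              rw [← Real.exp_add]; ring_nf
          rw [hsum]
          have hnn : (0:ℝ) ≤ ∑ j : Fin n, Real.exp (-k j) :=
            Finset.sum_nonneg fun j _ => (Real.exp_pos _).le
          nlinarith [Real.exp_pos (-t)]
  -- expectation of Mf is at most 1
  have hMlint : ∫⁻ ω, ENNReal.ofReal (Mf ω) ∂μ ≤ 1 := by
    rw [lintegral_eq_lintegral_meas_le μ (ae_of_all _ hMnn) hMmeas.aemeasurable, ← hIoi]
    refine setLIntegral_mono' measurableSet_Ioi fun t ht => ?_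
    exact hMtail t ht
  have hMint : Integrable Mf μ := by
    refine ⟨hMmeas.aestronglyMeasurable, ?_⟩
    rw [hasFiniteIntegral_iff_ofReal (ae_of_all _ hMnn)]
    exact lt_of_le_of_lt hMlint ENNReal.one_lt_top
  have hMexp : ∫ ω, Mf ω ∂μ ≤ 1 := by
    rw [integral_eq_lintegral_of_nonneg_ae (ae_of_all _ hMnn) hMmeas.aestronglyMeasurable]
    calc (∫⁻ ω, ENNReal.ofReal (Mf ω) ∂μ).toReal ≤ (1 : ENNReal).toReal :=
          ENNReal.toReal_mono ENNReal.one_ne_top hMlint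
      _ = 1 := ENNReal.toReal_one
  -- sum of expected losses as an integral
  have hsum : ∑ t ∈ Finset.Icc 1 T, r t =
      ∫ ω, ∑ t ∈ Finset.Icc 1 T, s t (J t ω) ∂μ := by
    rw [integral_finset_sum _ fun t _ => hLint t]
    exact Finset.sum_congr rfl fun t _ => hr t
  rw [hsum]
  -- integrate the pointwise inequality
  have hBint : Integrable (fun ω =>
      (∑ t ∈ Finset.Icc 1 T, s t i) + (k i - q i ω) * g T + Mf ω * g T) μ := by
    refine Integrable.add (Integrable.add (integrable_const _) ?_) ?_
    · exact ((integrable_const (k i)).sub (hqint i)).mul_const _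
    · exact hMint.mul_const _
  have h6 := integral_mono (integrable_finset_sum _ fun t _ => hLint t) hBint key
  refine h6.trans ?_
  have e1 : Integrable (fun ω => (k i - q i ω) * g T) μ :=
    (Integrable.sub (integrable_const (k i)) (hqint i)).mul_const _
  have e0 : Integrable
      (fun ω => (∑ t ∈ Finset.Icc 1 T, s t i) + (k i - q i ω) * g T) μ :=
    (integrable_const _).add e1
  have h7 : ∫ ω, ((∑ t ∈ Finset.Icc 1 T, s t i) + (k i - q i ω) * g T + Mf ω * g T) ∂μ =
      (∑ t ∈ Finset.Icc 1 T, s t i) + (k i - 1) * g T + (∫ ω, Mf ω ∂μ) * g T := by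
    rw [integral_add e0 (hMint.mul_const _), integral_add (integrable_const _) e1,
      integral_const, integral_mul_const, integral_mul_const,
      integral_sub (integrable_const _) (hqint i), integral_const, hqexp i]
    simp [measure_univ]
  rw [h7]
  have hgT : g T = (ε T)⁻¹ := hgpos T hT
  have hgTnn : 0 ≤ g T := by rw [hgT]; exact (inv_pos.mpr (hεpos T)).le
  have h8 : (∫ ω, Mf ω ∂μ) * g T ≤ 1 * g T :=
    mul_le_mul_of_nonneg_right hMexp hgTnn
  have h9 : k i / ε T = k i * g T := by rw [hgT, div_eq_mul_inv]
  rw [h9]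
  linarith
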